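/- Let ‖·‖ be any norm on the space of n × n real matrices that is permutation-invariant, i.e., ‖PAQ‖ = ‖A‖ for all n × n real matrices A and all permutation matrices P and Q. If an n × n real matrix A is a Chebyshev center of Ω_n, i.e., max_{D ∈ Ω_n} ‖A − D‖ = inf over all n × n real matrices B of max_{D ∈ Ω_n} ‖B − D‖ =: R, then ‖A − P‖ = R for every permutation matrix P. -/

import Mathlib

open Matrix BigOperators

/-- The matrix `J_n` with all entries equal to `1/n`. -/
noncomputable def matJ (n : ℕ) : Matrix (Fin n) (Fin n) ℝ :=
  Matrix.of fun _ _ => (n : ℝ)⁻¹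

/-- The singular values of a real square matrix: the square roots of the
eigenvalues of `Aᴴ * A` (`Aᴴ = Aᵀ` over `ℝ`). -/
noncomputable def singularValues {n : ℕ} (A : Matrix (Fin n) (Fin n) ℝ) : Fin n → ℝ :=
  fun i => Real.sqrt ((Matrix.isHermitian_conjTranspose_mul_self A).eigenvalues i)

/-- The Schatten `p`-norm of a real square matrix. -/
noncomputable def schattenNorm {n : ℕ} (p : ℝ) (A : Matrix (Fin n) (Fin n) ℝ) : ℝ :=
  (∑ i, singularValues A i ^ p) ^ (1 / p)

/-- The Frobenius norm of a real square matrix. -/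
noncomputable def frobNorm {n : ℕ} (A : Matrix (Fin n) (Fin n) ℝ) : ℝ :=
  Real.sqrt (∑ i, ∑ j, (A i j) ^ 2)

/-- The minimal trace of a square matrix: the minimum over all permutations `σ`
of `∑ i, A i (σ i)`. -/
noncomputable def trMin {n : ℕ} (A : Matrix (Fin n) (Fin n) ℝ) : ℝ :=
  ⨅ σ : Equiv.Perm (Fin n), ∑ i, A i (σ i)

/-- A matrix is a permutation matrix if it is the matrix of some permutation. -/
def IsPermMatrix {n : ℕ} (P : Matrix (Fin n) (Fin n) ℝ) : Prop :=
  ∃ σ : Equiv.Perm (Fin n), P = σ.permMatrix ℝ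

section ccefpHelpers

variable {n : ℕ}

lemma permMatrix_mul_permMatrix' (σ τ : Equiv.Perm (Fin n)) :
    σ.permMatrix ℝ * τ.permMatrix ℝ = Equiv.Perm.permMatrix ℝ (σ.trans τ) := by
  show (σ.toPEquiv).toMatrix * (τ.toPEquiv).toMatrix = ((σ.trans τ).toPEquiv).toMatrix
  rw [Equiv.toPEquiv_trans, PEquiv.toMatrix_trans]

end ccefpHelpers

/-- For any permutation-invariant norm `N`, if `A` is a Chebyshev
center of `Ω_n` (unconstrained), then `A` is equidistant (distance equal to the
Chebyshev radius `R`) from every permutation matrix. -/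
theorem chebyshev_center_equidistant_from_permMatrices {n : ℕ}
    (N : Matrix (Fin n) (Fin n) ℝ → ℝ)
    (hadd : ∀ A B, N (A + B) ≤ N A + N B)
    (hsmul : ∀ (c : ℝ) (A), N (c • A) = |c| * N A)
    (hdef : ∀ A, N A = 0 → A = 0)
    (hperm : ∀ (A : Matrix (Fin n) (Fin n) ℝ) (σ τ : Equiv.Perm (Fin n)),
      N (σ.permMatrix ℝ * A * τ.permMatrix ℝ) = N A)
    (A : Matrix (Fin n) (Fin n) ℝ)
    (hA : sSup {r : ℝ | ∃ D ∈ doublyStochastic ℝ (Fin n), r = N (A - D)} =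
      ⨅ B : Matrix (Fin n) (Fin n) ℝ,
        sSup {r : ℝ | ∃ D ∈ doublyStochastic ℝ (Fin n), r = N (B - D)}) :
    ∀ σ : Equiv.Perm (Fin n), N (A - σ.permMatrix ℝ) =
      ⨅ B : Matrix (Fin n) (Fin n) ℝ,
        sSup {r : ℝ | ∃ D ∈ doublyStochastic ℝ (Fin n), r = N (B - D)} := by
  intro q
  set P : Equiv.Perm (Fin n) → Matrix (Fin n) (Fin n) ℝ := fun ρ => ρ.permMatrix ℝ with hP
  set S : Matrix (Fin n) (Fin n) ℝ → Set ℝ :=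
    fun B => {r : ℝ | ∃ D ∈ doublyStochastic ℝ (Fin n), r = N (B - D)} with hS
  set f : Matrix (Fin n) (Fin n) ℝ → ℝ := fun B => sSup (S B) with hf
  set R : ℝ := ⨅ B : Matrix (Fin n) (Fin n) ℝ, f B with hR
  -- basic facts about N
  have hN0 : N 0 = 0 := by simpa using hsmul 0 0
  have hNneg : ∀ X, 0 ≤ N X := by
    intro X
    have h1 : N (-X) = N X := by simpa using hsmul (-1) X
    have h2 := hadd X (-X)
    rw [add_neg_cancel, hN0, h1] at h2; linarith
  have hNsum : ∀ {ι : Type} (s : Finset ι) (g : ι → Matrix (Fin n) (Fin n) ℝ),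
      N (∑ i ∈ s, g i) ≤ ∑ i ∈ s, N (g i) := by
    intro ι s g
    induction s using Finset.cons_induction with
    | empty => simp [hN0]
    | cons a s ha ih =>
      rw [Finset.sum_cons, Finset.sum_cons]
      exact (hadd _ _).trans (by linarith)
  -- membership / nonemptiness
  have hmemS : ∀ (B : Matrix (Fin n) (Fin n) ℝ) (ρ : Equiv.Perm (Fin n)),
      N (B - P ρ) ∈ S B := fun B ρ => ⟨P ρ, permMatrix_mem_doublyStochastic, rfl⟩
  have hne : ∀ B, (S B).Nonempty := fun B => ⟨_, hmemS B 1⟩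
  -- key bounding lemma via Birkhoff
  have hkey : ∀ (B : Matrix (Fin n) (Fin n) ℝ) (t : ℝ),
      (∀ ρ : Equiv.Perm (Fin n), N (B - P ρ) ≤ t) → ∀ r ∈ S B, r ≤ t := by
    rintro B t ht r ⟨D, hD, rfl⟩
    obtain ⟨w, hw0, hw1, hw2⟩ := exists_eq_sum_perm_of_mem_doublyStochastic hD
    have hBD : B - D = ∑ ρ : Equiv.Perm (Fin n), w ρ • (B - P ρ) := by
      simp only [smul_sub, Finset.sum_sub_distrib, ← Finset.sum_smul, hw1, one_smul, hw2, hP]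
    have ht0 : 0 ≤ t := le_trans (hNneg _) (ht 1)
    calc N (B - D) ≤ ∑ ρ : Equiv.Perm (Fin n), N (w ρ • (B - P ρ)) := hBD ▸ hNsum _ _
      _ = ∑ ρ : Equiv.Perm (Fin n), w ρ * N (B - P ρ) := by
          simp only [hsmul]
          exact Finset.sum_congr rfl fun ρ _ => by rw [abs_of_nonneg (hw0 ρ)]
      _ ≤ ∑ ρ : Equiv.Perm (Fin n), w ρ * t :=
          Finset.sum_le_sum fun ρ _ => mul_le_mul_of_nonneg_left (ht ρ) (hw0 ρ)
      _ = t := by rw [← Finset.sum_mul, hw1, one_mul]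
  have hbdd : ∀ B, BddAbove (S B) := by
    intro B
    refine ⟨Finset.univ.sup' Finset.univ_nonempty (fun ρ => N (B - P ρ)), ?_⟩
    exact fun r hr => hkey B _ (fun ρ => Finset.le_sup' (fun ρ => N (B - P ρ)) (Finset.mem_univ ρ)) r hr
  -- nonnegativity of f, and R lower bounds
  have hf_nonneg : ∀ B, 0 ≤ f B := fun B =>
    le_trans (hNneg (B - P 1)) (le_csSup (hbdd B) (hmemS B 1))
  have hR_le : ∀ B, R ≤ f B := fun B =>
    ciInf_le ⟨0, by rintro x ⟨B', rfl⟩; exact hf_nonneg B'⟩ B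
  have hR0 : 0 ≤ R := le_ciInf hf_nonneg
  -- each permutation distance is at most R
  have hle : ∀ ρ : Equiv.Perm (Fin n), N (A - P ρ) ≤ R := by
    intro ρ
    have := le_csSup (hbdd A) (hmemS A ρ)
    rwa [show sSup (S A) = R from hA] at this
  -- the averaged matrix
  set K : ℕ := Fintype.card (Equiv.Perm (Fin n)) with hK
  have hKpos : 0 < K := Fintype.card_pos
  have hKR : (0:ℝ) < (K:ℝ) := by exact_mod_cast hKpos
  set T : ℝ := ∑ ρ : Equiv.Perm (Fin n), N (A - P ρ) with hT
  set c : ℝ := (K:ℝ)⁻¹ * T with hc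
  set B₀ : Matrix (Fin n) (Fin n) ℝ :=
    ((K:ℝ)^2)⁻¹ • ∑ σ : Equiv.Perm (Fin n), ∑ τ : Equiv.Perm (Fin n), P σ * A * P τ with hB₀
  have hBq : ∀ p : Equiv.Perm (Fin n), N (B₀ - P p) ≤ c := by
    intro p
    have e1 : B₀ - P p = ((K:ℝ)^2)⁻¹ •
        ∑ σ : Equiv.Perm (Fin n), ∑ τ : Equiv.Perm (Fin n), (P σ * A * P τ - P p) := by
      have e2 : ∑ σ : Equiv.Perm (Fin n), ∑ τ : Equiv.Perm (Fin n), (P σ * A * P τ - P p)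
          = (∑ σ : Equiv.Perm (Fin n), ∑ τ : Equiv.Perm (Fin n), P σ * A * P τ)
            - ((K * K : ℕ) • P p) := by
        simp only [Finset.sum_sub_distrib, Finset.sum_const, Finset.card_univ, smul_smul, ← hK]
      rw [e2, smul_sub, hB₀, ← Nat.cast_smul_eq_nsmul ℝ, smul_smul]
      congr 1
      have : ((K:ℝ)^2)⁻¹ * ((K * K : ℕ) : ℝ) = 1 := by
        push_cast; field_simp
      rw [this, one_smul]
    have hterm : ∀ σ τ : Equiv.Perm (Fin n),
        N (P σ * A * P τ - P p) = N (A - P ((σ⁻¹.trans p).trans τ⁻¹)) := by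
      intro σ τ
      have e3 : P σ * A * P τ - P p = P σ * (A - P ((σ⁻¹.trans p).trans τ⁻¹)) * P τ := by
        rw [Matrix.mul_sub, Matrix.sub_mul]
        congr 1
        simp only [hP, permMatrix_mul_permMatrix']
        rw [show (σ.trans ((σ⁻¹.trans p).trans τ⁻¹)).trans τ = p from by ext x; simp]
      rw [e3, hperm]
    have hinner : ∀ σ : Equiv.Perm (Fin n),
        (∑ τ : Equiv.Perm (Fin n), N (A - P ((σ⁻¹.trans p).trans τ⁻¹))) = T := by
      intro σ
      rw [hT]
      set κ : Equiv.Perm (Fin n) := σ⁻¹.trans p with hκ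
      have := Equiv.sum_comp ((Equiv.inv (Equiv.Perm (Fin n))).trans (Equiv.mulRight κ))
        (fun ρ => N (A - P ρ))
      rw [← this]
      rfl
    calc N (B₀ - P p)
        = ((K:ℝ)^2)⁻¹ * N (∑ σ : Equiv.Perm (Fin n), ∑ τ : Equiv.Perm (Fin n),
            (P σ * A * P τ - P p)) := by
          rw [e1, hsmul, abs_of_nonneg (by positivity)]
      _ ≤ ((K:ℝ)^2)⁻¹ * ∑ σ : Equiv.Perm (Fin n), ∑ τ : Equiv.Perm (Fin n),
            N (P σ * A * P τ - P p) := by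
          refine mul_le_mul_of_nonneg_left ?_ (by positivity)
          exact (hNsum _ _).trans (Finset.sum_le_sum fun σ _ => hNsum _ _)
      _ = ((K:ℝ)^2)⁻¹ * ∑ σ : Equiv.Perm (Fin n), T := by
          congr 1
          refine Finset.sum_congr rfl fun σ _ => ?_
          rw [← hinner σ]
          exact Finset.sum_congr rfl fun τ _ => hterm σ τ
      _ = c := by
          rw [Finset.sum_const, Finset.card_univ, ← hK, nsmul_eq_mul, hc]
          field_simp
  -- conclude
  have hfB : f B₀ ≤ c := csSup_le (hne B₀) (hkey B₀ c hBq)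
  have hRc : R ≤ c := (hR_le B₀).trans hfB
  have hsum_erase : ∑ ρ ∈ Finset.univ.erase q, N (A - P ρ) ≤ ((K:ℝ) - 1) * R := by
    have h1 : ∑ ρ ∈ Finset.univ.erase q, N (A - P ρ)
        ≤ (Finset.univ.erase q).card • R :=
      Finset.sum_le_card_nsmul _ _ _ fun ρ _ => hle ρ
    have h2 : (Finset.univ.erase q).card = K - 1 := by
      rw [Finset.card_erase_of_mem (Finset.mem_univ q), Finset.card_univ]
    rw [h2, nsmul_eq_mul] at h1
    calc ∑ ρ ∈ Finset.univ.erase q, N (A - P ρ) ≤ ((K - 1 : ℕ) : ℝ) * R := h1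
      _ = ((K:ℝ) - 1) * R := by rw [Nat.cast_sub hKpos]; push_cast; ring
  have hTsplit : T = N (A - P q) + ∑ ρ ∈ Finset.univ.erase q, N (A - P ρ) := by
    rw [hT, ← Finset.add_sum_erase _ _ (Finset.mem_univ q)]
  have hKRle : (K:ℝ) * R ≤ T := by
    have := hRc
    rw [hc] at this
    calc (K:ℝ) * R ≤ (K:ℝ) * ((K:ℝ)⁻¹ * T) := by
          exact mul_le_mul_of_nonneg_left this (le_of_lt hKR)
      _ = T := by field_simp
    
  have hge : R ≤ N (A - P q) := by nlinarith [hle q]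
  exact le_antisymm (hle q) hge
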